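/- If U(x_U⁻) < ∞ and U(x_U⁻)·V(x_U) < 1, then: (i) there exists a unique w_c in the open interval (1, x_V/x_U) with U(x_U⁻)·V(w_c·x_U) = 1; (ii) for every w with w_c < w < x_V/x_U there exists a unique x₁(w) in (0, x_U) with U(x₁(w))·V(w·x₁(w)) = 1; and (iii) for every w with 1 ≤ w < w_c there is no x ∈ (0, x_U) with U(x)·V(w·x) = 1. -/

import Mathlib

open Filter Topology Set

private lemma ps_summable_of_le {c : ℕ → ℝ} (hc : ∀ n, 0 ≤ c n) {x y : ℝ}
    (hx : 0 ≤ x) (hxy : x ≤ y) (hy : Summable fun n => c n * y ^ n) :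
    Summable fun n => c n * x ^ n :=
  hy.of_nonneg_of_le (fun n => mul_nonneg (hc n) (pow_nonneg hx n))
    (fun n => mul_le_mul_of_nonneg_left (pow_le_pow_left₀ hx hxy n) (hc n))

private lemma ps_mono {c : ℕ → ℝ} (hc : ∀ n, 0 ≤ c n) {x y : ℝ}
    (hx : 0 ≤ x) (hxy : x ≤ y) (hy : Summable fun n => c n * y ^ n) :
    ∑' n, c n * x ^ n ≤ ∑' n, c n * y ^ n :=
  Summable.tsum_le_tsum (fun n => mul_le_mul_of_nonneg_left (pow_le_pow_left₀ hx hxy n) (hc n))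
    (ps_summable_of_le hc hx hxy hy) hy

private lemma ps_strict {c : ℕ → ℝ} (hc : ∀ n, 0 ≤ c n) {N : ℕ} (hN : 1 ≤ N) (hcN : 0 < c N)
    {x y : ℝ} (hx : 0 ≤ x) (hxy : x < y) (hy : Summable fun n => c n * y ^ n) :
    ∑' n, c n * x ^ n < ∑' n, c n * y ^ n :=
  Summable.tsum_lt_tsum (i := N)
    (fun n => mul_le_mul_of_nonneg_left (pow_le_pow_left₀ hx hxy.le n) (hc n))
    (mul_lt_mul_of_pos_left (pow_lt_pow_left₀ hxy hx (by omega)) hcN)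
    (ps_summable_of_le hc hx hxy.le hy) hy

private lemma ps_le_coeff0 {c : ℕ → ℝ} (hc : ∀ n, 0 ≤ c n) {x : ℝ} (hx : 0 ≤ x)
    (hs : Summable fun n => c n * x ^ n) : c 0 ≤ ∑' n, c n * x ^ n := by
  have := Summable.le_tsum hs 0 (fun n _ => mul_nonneg (hc n) (pow_nonneg hx n))
  simpa using this

private lemma ps_contOn {c : ℕ → ℝ} (hc : ∀ n, 0 ≤ c n) {r : ℝ} (hr : 0 ≤ r)
    (hs : Summable fun n => c n * r ^ n) :
    ContinuousOn (fun x => ∑' n, c n * x ^ n) (Icc 0 r) := by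
  apply continuousOn_tsum (fun i => (continuous_const.mul (continuous_pow i)).continuousOn) hs
  intro n x hx
  simp only [Pi.mul_apply]
  rw [Real.norm_eq_abs, abs_mul, abs_of_nonneg (hc n), abs_pow]
  exact mul_le_mul_of_nonneg_left
    (pow_le_pow_left₀ (abs_nonneg x) (by rw [abs_of_nonneg hx.1]; exact hx.2) n) (hc n)

/-- If U(x_U⁻) < ∞ and U(x_U⁻)·V(x_U) < 1, then (i) there is a unique
w_c ∈ (1, x_V/x_U) with U(x_U⁻)·V(w_c·x_U) = 1; (ii) for w_c < w < x_V/x_U there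
is a unique x₁(w) ∈ (0, x_U) with U(x₁(w))·V(w·x₁(w)) = 1; (iii) for 1 ≤ w < w_c
there is no x ∈ (0, x_U) with U(x)·V(w·x) = 1. -/
theorem stmt_3
    (p b : ℕ → ℝ)
    (hp : ∀ n, 0 ≤ p n) (hp0 : p 0 = 0)
    (hb : ∀ n, 0 ≤ b n) (hb0 : 0 < b 0)
    (hpN : ∃ N, 1 ≤ N ∧ 0 < p N) (hbM : ∃ M, 1 ≤ M ∧ 0 < b M)
    (U V : ℝ → ℝ)
    (hU : ∀ x, U x = ∑' n, p n * x ^ n)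
    (hV : ∀ x, V x = ∑' n, b n * x ^ n)
    (xU xV : ℝ) (hxU0 : 0 < xU) (hxUV : xU < xV) (hxV1 : xV ≤ 1)
    (hUconv : ∀ x : ℝ, 0 ≤ x → x < xU → Summable fun n => p n * x ^ n)
    (hUdiv : ∀ x : ℝ, xU < x → ¬ Summable fun n => p n * x ^ n)
    (hVconv : ∀ x : ℝ, 0 ≤ x → x < xV → Summable fun n => b n * x ^ n)
    (hVdiv : ∀ x : ℝ, xV < x → ¬ Summable fun n => b n * x ^ n)
    (hVinf : Filter.Tendsto V (𝓝[<] xV) Filter.atTop)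
    (L : ℝ) (hL : Filter.Tendsto U (𝓝[<] xU) (𝓝 L))
    (hL1 : L * V xU < 1) :
    ∃ wc : ℝ, (wc ∈ Set.Ioo 1 (xV / xU) ∧ L * V (wc * xU) = 1) ∧
      (∀ wc' : ℝ, wc' ∈ Set.Ioo 1 (xV / xU) ∧ L * V (wc' * xU) = 1 → wc' = wc) ∧
      (∀ w : ℝ, wc < w → w < xV / xU →
        ∃! x : ℝ, x ∈ Set.Ioo 0 xU ∧ U x * V (w * x) = 1) ∧
      (∀ w : ℝ, 1 ≤ w → w < wc →
        ∀ x ∈ Set.Ioo 0 xU, U x * V (w * x) ≠ 1) := by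
  obtain ⟨N, hN1, hpN⟩ := hpN
  obtain ⟨M, hM1, hbM⟩ := hbM
  -- partial sums of U at xU are bounded by L
  have hpartial : ∀ k : ℕ, ∑ n ∈ Finset.range k, p n * xU ^ n ≤ L := by
    intro k
    have hcont : Tendsto (fun x : ℝ => ∑ n ∈ Finset.range k, p n * x ^ n) (𝓝[<] xU)
        (𝓝 (∑ n ∈ Finset.range k, p n * xU ^ n)) :=
      ((continuous_finset_sum _ fun i _ => continuous_const.mul (continuous_pow i)).tendsto
        xU).mono_left nhdsWithin_le_nhds
    refine le_of_tendsto_of_tendsto hcont hL ?_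
    filter_upwards [Ioo_mem_nhdsLT_of_mem (show xU ∈ Ioc (0:ℝ) xU from ⟨hxU0, le_refl _⟩)]
      with x hx
    rw [hU]
    exact Summable.sum_le_tsum (Finset.range k)
      (fun n _ => mul_nonneg (hp n) (pow_nonneg hx.1.le n)) (hUconv x hx.1.le hx.2)
  have hsumxU : Summable fun n => p n * xU ^ n :=
    summable_of_sum_range_le (fun n => mul_nonneg (hp n) (pow_nonneg hxU0.le n)) hpartial
  have hUxU_le : ∑' n, p n * xU ^ n ≤ L :=
    Real.tsum_le_of_sum_range_le (fun n => mul_nonneg (hp n) (pow_nonneg hxU0.le n)) hpartial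
  have hL_le : L ≤ ∑' n, p n * xU ^ n := by
    refine le_of_tendsto hL ?_
    filter_upwards [Ioo_mem_nhdsLT_of_mem (show xU ∈ Ioc (0:ℝ) xU from ⟨hxU0, le_refl _⟩)]
      with x hx
    rw [hU]
    exact ps_mono hp hx.1.le hx.2.le hsumxU
  have hUxU : U xU = L := by rw [hU]; linarith
  have hLpos : 0 < L := by
    rw [← hUxU, hU]
    calc (0:ℝ) < p N * xU ^ N := mul_pos hpN (pow_pos hxU0 N)
      _ ≤ _ := Summable.le_tsum hsumxU N (fun n _ => mul_nonneg (hp n) (pow_nonneg hxU0.le n))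
  -- basic facts about U and V
  have hVmono : ∀ s t : ℝ, 0 ≤ s → s ≤ t → t < xV → V s ≤ V t := fun s t hs hst ht => by
    rw [hV, hV]; exact ps_mono hb hs hst (hVconv t (hs.trans hst) ht)
  have hVstrict : ∀ s t : ℝ, 0 ≤ s → s < t → t < xV → V s < V t := fun s t hs hst ht => by
    rw [hV, hV]; exact ps_strict hb hM1 hbM hs hst (hVconv t (hs.trans hst.le) ht)
  have hVpos : ∀ s : ℝ, 0 ≤ s → s < xV → 0 < V s := fun s hs hsv => by
    rw [hV]; exact lt_of_lt_of_le hb0 (ps_le_coeff0 hb hs (hVconv s hs hsv))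
  have hUstrict : ∀ s t : ℝ, 0 ≤ s → s < t → t ≤ xU → U s < U t := fun s t hs hst ht => by
    rw [hU, hU]
    exact ps_strict hp hN1 hpN hs hst
      (ps_summable_of_le hp (hs.trans hst.le) ht hsumxU)
  have hUlt : ∀ s : ℝ, 0 ≤ s → s < xU → U s < L := fun s hs hsu => by
    rw [← hUxU]; exact hUstrict s xU hs hsu le_rfl
  have hUnonneg : ∀ s : ℝ, 0 ≤ s → 0 ≤ U s := fun s hs => by
    rw [hU]; exact tsum_nonneg (fun n => mul_nonneg (hp n) (pow_nonneg hs n))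
  have hVcont : ∀ r : ℝ, 0 ≤ r → r < xV → ContinuousOn V (Icc 0 r) := by
    intro r hr0 hr
    rw [funext hV]
    exact ps_contOn hb hr0 (hVconv r hr0 hr)
  have hUcont : ContinuousOn U (Icc 0 xU) := by
    rw [funext hU]
    exact ps_contOn hp hxU0.le hsumxU
  have hU0 : U 0 = 0 := by
    rw [hU, tsum_eq_single 0 (fun n hn => by simp [zero_pow hn])]
    simp [hp0]
  -- find w₁ > 1 with L * V (w₁ * xU) > 1
  have h1 : ∀ᶠ y in 𝓝[<] xV, 1 / L < V y := hVinf.eventually_gt_atTop (1 / L)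
  have h2 : Ioo xU xV ∈ 𝓝[<] xV :=
    Ioo_mem_nhdsLT_of_mem (show xV ∈ Ioc xU xV from ⟨hxUV, le_refl _⟩)
  obtain ⟨y, hy1, hy2⟩ := (h1.and (eventually_of_mem h2 (fun y hy => hy))).exists
  have hyU : xU < y := hy2.1
  have hyV : y < xV := hy2.2
  have hy0 : 0 ≤ y := le_trans hxU0.le hyU.le
  set w₁ : ℝ := y / xU with hw₁def
  have hw₁xU : w₁ * xU = y := by rw [hw₁def, div_mul_cancel₀ _ hxU0.ne']
  have hw₁1 : 1 < w₁ := (lt_div_iff₀ hxU0).mpr (by linarith)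
  have hw₁V : w₁ < xV / xU := by
    rw [hw₁def, div_lt_div_iff₀ hxU0 hxU0]; nlinarith
  -- continuity of g w = L * V (w * xU) on [1, w₁]
  have hmaps : MapsTo (fun w : ℝ => w * xU) (Icc 1 w₁) (Icc 0 y) := by
    intro w hw
    constructor
    · exact mul_nonneg (by linarith [hw.1]) hxU0.le
    · calc w * xU ≤ w₁ * xU := by nlinarith [hw.2]
        _ = y := hw₁xU
  have hgcont : ContinuousOn (fun w => L * V (w * xU)) (Icc 1 w₁) := by
    refine continuousOn_const.mul ?_
    exact (hVcont y hy0 hyV).comp ((continuousOn_id.mul continuousOn_const)) hmaps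
  -- IVT for wc
  have hg1 : L * V (1 * xU) < 1 := by rw [one_mul]; exact hL1
  have hgw₁ : 1 < L * V (w₁ * xU) := by
    rw [hw₁xU, mul_comm]
    exact (div_lt_iff₀ hLpos).mp hy1
  obtain ⟨wc, hwcmem, hwc_eq0⟩ :=
    intermediate_value_Ioo hw₁1.le hgcont (Set.mem_Ioo.mpr ⟨hg1, hgw₁⟩)
  have hwc_eq : L * V (wc * xU) = 1 := hwc_eq0
  have hwc1 : 1 < wc := hwcmem.1
  have hwcV : wc < xV / xU := lt_trans hwcmem.2 hw₁V
  have hwcxUlt : wc * xU < xV := (lt_div_iff₀ hxU0).mp hwcV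
  -- strict monotonicity of g
  have gstrict : ∀ a c : ℝ, 0 < a → a < c → c < xV / xU →
      L * V (a * xU) < L * V (c * xU) := by
    intro a c ha hac hc
    have hcv : c * xU < xV := (lt_div_iff₀ hxU0).mp hc
    exact mul_lt_mul_of_pos_left
      (hVstrict _ _ (mul_nonneg ha.le hxU0.le) (by nlinarith) hcv) hLpos
  refine ⟨wc, ⟨⟨hwc1, hwcV⟩, hwc_eq⟩, ?_, ?_, ?_⟩
  · -- uniqueness of wc
    rintro wc' ⟨⟨hwc'1, hwc'V⟩, heq⟩
    rcases lt_trichotomy wc' wc with h | h | h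
    · have := gstrict wc' wc (by linarith) h hwcV
      rw [heq, hwc_eq] at this; linarith
    · exact h
    · have := gstrict wc wc' (by linarith) h hwc'V
      rw [heq, hwc_eq] at this; linarith
  · -- part (ii)
    intro w hww hwV
    have hw0 : 0 < w := by linarith
    have hrxV : w * xU < xV := (lt_div_iff₀ hxU0).mp hwV
    have hr0 : 0 ≤ w * xU := mul_nonneg hw0.le hxU0.le
    have hmaps2 : MapsTo (fun x : ℝ => w * x) (Icc 0 xU) (Icc 0 (w * xU)) := by
      intro x hx
      exact ⟨mul_nonneg hw0.le hx.1, mul_le_mul_of_nonneg_left hx.2 hw0.le⟩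
    have hFcont : ContinuousOn (fun x => U x * V (w * x)) (Icc 0 xU) :=
      hUcont.mul ((hVcont (w * xU) hr0 hrxV).comp
        (continuousOn_const.mul continuousOn_id) hmaps2)
    have hF0 : U 0 * V (w * 0) = 0 := by rw [hU0, zero_mul]
    have hFxU : 1 < U xU * V (w * xU) := by
      rw [hUxU, ← hwc_eq]
      exact gstrict wc w (by linarith) hww hwV
    obtain ⟨x₁, hx₁mem, hx₁0⟩ := intermediate_value_Ioo hxU0.le hFcont
      (Set.mem_Ioo.mpr ⟨by rw [hF0]; norm_num, hFxU⟩)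
    have hx₁ : U x₁ * V (w * x₁) = 1 := hx₁0
    have Fstrict : ∀ s t : ℝ, 0 ≤ s → s < t → t ≤ xU →
        U s * V (w * s) < U t * V (w * t) := by
      intro s t hs hst ht
      have hwt : w * t < xV := lt_of_le_of_lt (mul_le_mul_of_nonneg_left ht hw0.le) hrxV
      have h1 : U s < U t := hUstrict s t hs hst ht
      have h2 : V (w * s) ≤ V (w * t) :=
        hVmono _ _ (mul_nonneg hw0.le hs) (mul_le_mul_of_nonneg_left hst.le hw0.le) hwt
      have h3 : 0 < V (w * t) := hVpos _ (mul_nonneg hw0.le (hs.trans hst.le)) hwt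
      calc U s * V (w * s) ≤ U s * V (w * t) :=
            mul_le_mul_of_nonneg_left h2 (hUnonneg s hs)
        _ < U t * V (w * t) := mul_lt_mul_of_pos_right h1 h3
    refine ⟨x₁, ⟨hx₁mem, hx₁⟩, ?_⟩
    rintro x' ⟨hx'mem, hx'⟩
    rcases lt_trichotomy x' x₁ with h | h | h
    · have := Fstrict x' x₁ hx'mem.1.le h hx₁mem.2.le
      rw [hx', hx₁] at this; exact absurd this (lt_irrefl 1)
    · exact h
    · have := Fstrict x₁ x' hx₁mem.1.le h hx'mem.2.le
      rw [hx', hx₁] at this; exact absurd this (lt_irrefl 1)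
  · -- part (iii)
    intro w hw1 hwwc x hx
    have hbound : w * x < wc * xU :=
      lt_trans (mul_lt_mul_of_pos_right hwwc hx.1) (mul_lt_mul_of_pos_left hx.2 (by linarith))
    have hwx0 : 0 ≤ w * x := mul_nonneg (by linarith) hx.1.le
    have h2 : V (w * x) ≤ V (wc * xU) := hVmono _ _ hwx0 hbound.le hwcxUlt
    have h3 : 0 < V (w * x) := hVpos _ hwx0 (hbound.trans hwcxUlt)
    have h1 : U x < L := hUlt x hx.1.le hx.2
    have : U x * V (w * x) < 1 :=
      calc U x * V (w * x) < L * V (w * x) := mul_lt_mul_of_pos_right h1 h3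
        _ ≤ L * V (wc * xU) := mul_le_mul_of_nonneg_left h2 hLpos.le
        _ = 1 := hwc_eq
    exact ne_of_lt this
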